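/- Let G = (V, E) be a d-regular graph with adjacency matrix A, and let λ ≥ 0 be such that ‖Ax‖ ≤ λ‖x‖ for every vector x orthogonal to the all-ones vector. Let S, T ⊆ V with S nonempty and |S| ≤ |V|/2. If u is chosen uniformly at random from S and v is a uniformly random neighbor of u, then Pr[v ∈ T] ≤ |T|/|V| + (λ/d)·√(|T|/|S|). -/

import Mathlib

open Finset

/-- expander mixing bound.  Let `A` be the adjacency matrix (with natural
number multiplicities, self loops allowed) of a `d`-regular graph on a finite vertex set, and
let `λ ≥ 0` satisfy `‖Ax‖ ≤ λ‖x‖` for every `x` orthogonal to the all-ones vector.  For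
`S, T ⊆ V` with `S` nonempty and `|S| ≤ |V|/2`: picking `u` uniformly in `S` and `v` a
uniformly random neighbor of `u` (i.e. with probability `A u v / d`),
`Pr[v ∈ T] ≤ |T|/|V| + (λ/d)·√(|T|/|S|)`. -/
theorem expander_mixing_uniform {ι : Type*} [Fintype ι] [DecidableEq ι]
    (A : ι → ι → ℕ) (d : ℕ) (hd : 0 < d)
    (hsym : ∀ u v, A u v = A v u)
    (hreg : ∀ u, ∑ v, A u v = d)
    (lam : ℝ) (hlam : 0 ≤ lam)
    (hspec : ∀ x : ι → ℝ, (∑ v, x v) = 0 →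
      Real.sqrt (∑ u, (∑ v, (A u v : ℝ) * x v) ^ 2) ≤ lam * Real.sqrt (∑ v, x v ^ 2))
    (S T : Finset ι) (hS : S.Nonempty)
    (hhalf : (S.card : ℝ) ≤ (Fintype.card ι : ℝ) / 2) :
    (S.card : ℝ)⁻¹ * ∑ u ∈ S, (∑ v ∈ T, (A u v : ℝ)) / d ≤
      (T.card : ℝ) / (Fintype.card ι : ℝ) +
        (lam / d) * Real.sqrt ((T.card : ℝ) / (S.card : ℝ)) := by
  classical
  have hι : 0 < Fintype.card ι := Fintype.card_pos_iff.mpr ⟨hS.choose⟩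
  have hn0 : (0:ℝ) < (Fintype.card ι : ℝ) := by exact_mod_cast hι
  have hs0 : (0:ℝ) < (S.card : ℝ) := by exact_mod_cast hS.card_pos
  have hd0 : (0:ℝ) < (d:ℝ) := by exact_mod_cast hd
  set n : ℝ := (Fintype.card ι : ℝ) with hn
  set t : ℝ := (T.card : ℝ) / n with ht
  set y : ι → ℝ := fun v => (if v ∈ T then (1:ℝ) else 0) - t with hy
  have hind : ∑ v, (if v ∈ T then (1:ℝ) else 0) = (T.card : ℝ) := by
    simp
  have hsumy : ∑ v, y v = 0 := by
    simp only [hy, Finset.sum_sub_distrib, hind, Finset.sum_const, Finset.card_univ,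
      nsmul_eq_mul, ht]
    field_simp
    rw [← hn]; ring
  have hy2 : ∑ v, y v ^ 2 ≤ (T.card : ℝ) := by
    have : ∑ v, y v ^ 2 = ∑ v, ((if v ∈ T then (1:ℝ) else 0) - 2 * t * (if v ∈ T then (1:ℝ) else 0) + t ^ 2) := by
      apply Finset.sum_congr rfl
      intro v _
      by_cases hv : v ∈ T <;> simp [hy, hv] <;> ring
    rw [this]
    rw [Finset.sum_add_distrib, Finset.sum_sub_distrib, hind, ← Finset.mul_sum, hind]
    simp only [Finset.sum_const, Finset.card_univ, nsmul_eq_mul, ← hn]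
    have : (T.card : ℝ) - 2 * t * T.card + n * t ^ 2 = (T.card : ℝ) - (T.card : ℝ)^2 / n := by
      rw [ht]; field_simp; ring
    rw [this]
    have : 0 ≤ (T.card : ℝ)^2 / n := by positivity
    linarith
  set g : ι → ℝ := fun u => ∑ v, (A u v : ℝ) * y v with hg
  have hregR : ∀ u, ∑ v, (A u v : ℝ) = d := by
    intro u; exact_mod_cast hreg u
  have hgT : ∀ u, ∑ v ∈ T, (A u v : ℝ) = g u + t * d := by
    intro u
    have : g u = ∑ v ∈ T, (A u v : ℝ) - t * d := by
      simp only [hg, hy, mul_sub]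
      rw [Finset.sum_sub_distrib]
      congr 1
      · simp [mul_ite, mul_one, mul_zero, Finset.sum_ite_mem, Finset.univ_inter]
      · rw [← Finset.sum_mul, hregR u]; ring
    rw [this]; ring
  -- Cauchy-Schwarz and spectral bound
  have hcs : ∑ u ∈ S, g u ≤ Real.sqrt (S.card) * (lam * Real.sqrt (T.card)) := by
    have h1 : (∑ u ∈ S, g u) ^ 2 ≤ S.card * ∑ u ∈ S, g u ^ 2 :=
      sq_sum_le_card_mul_sum_sq
    have h2 : ∑ u ∈ S, g u ^ 2 ≤ ∑ u, g u ^ 2 :=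
      Finset.sum_le_univ_sum_of_nonneg (fun u => sq_nonneg _)
    have h3 : Real.sqrt (∑ u, g u ^ 2) ≤ lam * Real.sqrt (∑ v, y v ^ 2) :=
      hspec y hsumy
    have h4 : Real.sqrt (∑ v, y v ^ 2) ≤ Real.sqrt (T.card) :=
      Real.sqrt_le_sqrt hy2
    calc ∑ u ∈ S, g u ≤ Real.sqrt ((∑ u ∈ S, g u) ^ 2) := by
          rw [Real.sqrt_sq_eq_abs]; exact le_abs_self _
      _ ≤ Real.sqrt (S.card * ∑ u, g u ^ 2) := by
          apply Real.sqrt_le_sqrt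
          calc (∑ u ∈ S, g u) ^ 2 ≤ S.card * ∑ u ∈ S, g u ^ 2 := h1
            _ ≤ S.card * ∑ u, g u ^ 2 := by
                apply mul_le_mul_of_nonneg_left h2 (by positivity)
      _ = Real.sqrt (S.card) * Real.sqrt (∑ u, g u ^ 2) := by
          rw [Real.sqrt_mul (by positivity)]
      _ ≤ Real.sqrt (S.card) * (lam * Real.sqrt (T.card)) := by
          apply mul_le_mul_of_nonneg_left _ (Real.sqrt_nonneg _)
          exact h3.trans (mul_le_mul_of_nonneg_left h4 hlam)
  -- rewrite LHS
  have hLHS : (S.card : ℝ)⁻¹ * ∑ u ∈ S, (∑ v ∈ T, (A u v : ℝ)) / d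
      = t + (∑ u ∈ S, g u) / (S.card * d) := by
    have : ∑ u ∈ S, (∑ v ∈ T, (A u v : ℝ)) / d = ∑ u ∈ S, (g u + t * d) / d := by
      apply Finset.sum_congr rfl; intro u _; rw [hgT u]
    rw [this]
    have h5 : ∀ u ∈ S, (g u + t * (d:ℝ)) / d = g u / d + t := fun u _ => by field_simp
    rw [Finset.sum_congr rfl h5, Finset.sum_add_distrib, ← Finset.sum_div]
    simp only [Finset.sum_const, nsmul_eq_mul]
    field_simp
    ring
  rw [hLHS]
  have hfinal : (∑ u ∈ S, g u) / (S.card * d) ≤ (lam / d) * Real.sqrt ((T.card : ℝ) / (S.card : ℝ)) := by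
    have hsd : (0:ℝ) < (S.card : ℝ) * d := by positivity
    have hss : (0:ℝ) < Real.sqrt (S.card : ℝ) := Real.sqrt_pos.mpr hs0
    have heq : Real.sqrt (S.card : ℝ) * (lam * Real.sqrt (T.card : ℝ)) / ((S.card : ℝ) * d)
        = (lam / d) * Real.sqrt ((T.card : ℝ) / (S.card : ℝ)) := by
      rw [Real.sqrt_div (by positivity : (0:ℝ) ≤ (T.card : ℝ))]
      have hms : Real.sqrt (S.card : ℝ) * Real.sqrt (S.card : ℝ) = (S.card : ℝ) :=
        Real.mul_self_sqrt hs0.le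
      field_simp
      linear_combination (lam * Real.sqrt (T.card : ℝ)) * hms
    rw [← heq]
    exact div_le_div_of_nonneg_right hcs hsd.le
  linarith [hfinal]
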